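/- Let R, C, μ > 0 and let n ≥ 1 be an integer with Rμ/C ≥ n + 1. Then the social benefit rate function f_n is either concave and monotone increasing on [0,∞), or unimodal on [0,∞): there exists ρ* > 0 such that f_n is strictly increasing on [0, ρ*] and strictly decreasing on [ρ*, ∞). -/

import Mathlib

/-- The social benefit rate function `f_n` of Naor's observable M/M/1 queue. -/
noncomputable def socialRate (R C μ : ℝ) (n : ℕ) (ρ : ℝ) : ℝ :=
  if ρ = 1 then R * μ * ((n : ℝ) / ((n : ℝ) + 1)) - C * ((n : ℝ) / 2)
  else R * μ * (ρ * (1 - ρ ^ n) / (1 - ρ ^ (n + 1)))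
      - C * (ρ / (1 - ρ) - ((n : ℝ) + 1) * ρ ^ (n + 1) / (1 - ρ ^ (n + 1)))

open Finset Set

noncomputable def af (R C μ : ℝ) (k : ℕ) : ℝ := if k = 0 then 0 else R * μ - C * k

noncomputable def Qf (n : ℕ) (x : ℝ) : ℝ := ∑ k ∈ range (n+1), x ^ k
noncomputable def Pf (R C μ : ℝ) (n : ℕ) (x : ℝ) : ℝ := ∑ k ∈ range (n+1), af R C μ k * x ^ k
noncomputable def Qd (n : ℕ) (x : ℝ) : ℝ := ∑ k ∈ range (n+1), (k:ℝ) * x ^ (k-1)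
noncomputable def Pd (R C μ : ℝ) (n : ℕ) (x : ℝ) : ℝ :=
  ∑ k ∈ range (n+1), af R C μ k * ((k:ℝ) * x ^ (k-1))
noncomputable def cf (R C μ : ℝ) (n : ℕ) (m : ℕ) : ℝ :=
  ∑ j ∈ range (n+1), ∑ k ∈ range (n+1),
    if j + k = m + 1 ∧ j < k then (af R C μ k - af R C μ j) * ((k:ℝ) - (j:ℝ)) else 0
noncomputable def Nf (R C μ : ℝ) (n : ℕ) (x : ℝ) : ℝ := ∑ m ∈ range (2*n), cf R C μ n m * x ^ m

lemma Qf_pos (n : ℕ) {x : ℝ} (hx : 0 ≤ x) : 0 < Qf n x := by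
  have : (1:ℝ) ≤ ∑ k ∈ range (n+1), x ^ k := by
    calc (1:ℝ) = ∑ k ∈ range 1, x ^ k := by simp
    _ ≤ _ := by
      apply Finset.sum_le_sum_of_subset_of_nonneg
      · exact Finset.range_subset_range.2 (by omega)
      · intro i _ _; positivity
  unfold Qf; linarith

lemma geom1 (x : ℝ) (m : ℕ) : (1 - x) * ∑ k ∈ range m, x ^ k = 1 - x ^ m := by
  have := geom_sum_mul x m
  nlinarith [this]

lemma geom2 (x : ℝ) (m : ℕ) :
    (1 - x) * ∑ k ∈ range (m+1), (k:ℝ) * x ^ k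
      = (∑ k ∈ range (m+1), x ^ k) - 1 - m * x ^ (m+1) := by
  induction m with
  | zero => simp
  | succ m ih =>
    rw [Finset.sum_range_succ, Finset.sum_range_succ (f := fun k => x ^ k)]
    push_cast
    push_cast at ih
    linear_combination ih

lemma Pf_eq (R C μ : ℝ) (n : ℕ) (x : ℝ) :
    Pf R C μ n x = R * μ * (Qf n x - 1) - C * ∑ k ∈ range (n+1), (k:ℝ) * x ^ k := by
  unfold Pf Qf af
  have h1 : ∀ k ∈ range (n+1),
      (if k = 0 then (0:ℝ) else R * μ - C * k) * x ^ k
        = (R * μ * x ^ k - C * ((k:ℝ) * x ^ k)) - (if k = 0 then R * μ else 0) := by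
    intro k _
    rcases Nat.eq_zero_or_pos k with h | h
    · subst h; simp
    · rw [if_neg (by omega), if_neg (by omega)]; ring
  rw [Finset.sum_congr rfl h1, Finset.sum_sub_distrib, Finset.sum_sub_distrib]
  have h2 : ∑ k ∈ range (n+1), (if k = 0 then R * μ else (0:ℝ)) = R * μ := by
    rw [Finset.sum_ite_eq' (range (n+1)) 0 (fun _ => R * μ)]
    simp
  rw [h2, ← Finset.mul_sum, ← Finset.mul_sum]
  ring

lemma rate_eq (R C μ : ℝ) (n : ℕ) (hn : 1 ≤ n) {x : ℝ} (hx : 0 ≤ x) :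
    socialRate R C μ n x = Pf R C μ n x / Qf n x := by
  have hQ := Qf_pos n hx
  rcases eq_or_ne x 1 with h1 | h1
  · subst h1
    have hQ1 : Qf n 1 = (n:ℝ) + 1 := by unfold Qf; simp
    have hsum : (∑ k ∈ range (n+1), (k:ℝ)) * 2 = (n:ℝ) * ((n:ℝ)+1) := by
      have h := congrArg (Nat.cast (R := ℝ)) (Finset.sum_range_id_mul_two (n+1))
      push_cast at h
      linarith
    have hS : (∑ k ∈ range (n+1), (k:ℝ) * (1:ℝ) ^ k) = (n:ℝ) * ((n:ℝ)+1) / 2 := by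
      simp only [one_pow, mul_one]
      linarith
    rw [socialRate, if_pos rfl, Pf_eq, hQ1, hS]
    have hn1 : (n:ℝ) + 1 ≠ 0 := by positivity
    field_simp
    ring
  · rw [socialRate, if_neg h1]
    have hx1 : (1:ℝ) - x ≠ 0 := by
      intro h; apply h1; linarith [sub_eq_zero.mp h]
    have hgeom : (1 - x) * Qf n x = 1 - x ^ (n+1) := geom1 x (n+1)
    have hxn : (1:ℝ) - x ^ (n+1) ≠ 0 := by
      rw [← hgeom]; exact mul_ne_zero hx1 (ne_of_gt hQ)
    have eS : (∑ k ∈ range (n+1), (k:ℝ) * x ^ k)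
        = (Qf n x - 1 - n * x ^ (n+1)) / (1 - x) := by
      rw [eq_div_iff hx1]
      unfold Qf
      linear_combination geom2 x n
    have eQ : Qf n x = (1 - x ^ (n+1)) / (1 - x) := by
      rw [eq_div_iff hx1]
      linear_combination hgeom
    rw [Pf_eq, eS, eQ]
    have hQ' := ne_of_gt hQ
    rw [eQ] at hQ'
    field_simp
    ring

lemma hasDeriv_Qf (n : ℕ) (x : ℝ) : HasDerivAt (Qf n) (Qd n x) x := by
  unfold Qf Qd
  exact HasDerivAt.fun_sum fun k _ => hasDerivAt_pow k x

lemma hasDeriv_Pf (R C μ : ℝ) (n : ℕ) (x : ℝ) : HasDerivAt (Pf R C μ n) (Pd R C μ n x) x := by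
  unfold Pf Pd
  exact HasDerivAt.fun_sum fun k _ => (hasDerivAt_pow k x).const_mul (af R C μ k)

lemma Nf_eq (R C μ : ℝ) (n : ℕ) (x : ℝ) :
    Nf R C μ n x = Pd R C μ n x * Qf n x - Pf R C μ n x * Qd n x := by
  have hRHS : Pd R C μ n x * Qf n x - Pf R C μ n x * Qd n x
      = ∑ k ∈ range (n+1), ∑ j ∈ range (n+1),
          (af R C μ k * ((k:ℝ) * x ^ (k-1)) * x ^ j
            - af R C μ k * x ^ k * ((j:ℝ) * x ^ (j-1))) := by
    unfold Pd Qf Pf Qd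
    rw [Finset.sum_mul_sum, Finset.sum_mul_sum, ← Finset.sum_sub_distrib]
    exact Finset.sum_congr rfl fun k _ => by rw [Finset.sum_sub_distrib]
  -- the raw (j,k) term
  set F : ℕ → ℕ → ℝ := fun j k =>
    af R C μ k * ((k:ℝ) * x ^ (k-1)) * x ^ j - af R C μ k * x ^ k * ((j:ℝ) * x ^ (j-1)) with hF
  -- the symmetrized term
  set G : ℕ → ℕ → ℝ := fun j k =>
    if j < k then (af R C μ k - af R C μ j) * ((k:ℝ) - (j:ℝ)) * x ^ (j + k - 1) else 0 with hG
  have key : ∀ j k, j < k → F j k + F k j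
      = (af R C μ k - af R C μ j) * ((k:ℝ) - (j:ℝ)) * x ^ (j + k - 1) := by
    intro j k hjk
    rcases Nat.eq_zero_or_pos j with hj | hj
    · subst hj
      simp only [hF, af, if_pos rfl]
      rw [if_neg (by omega)]
      have e1 : x ^ (k-1) * x ^ 0 = x ^ (0 + k - 1) := by
        rw [← pow_add]; congr 1; omega
      push_cast
      ring_nf
    · have hk : k ≠ 0 := by omega
      simp only [hF, af, if_neg (by omega : j ≠ 0), if_neg hk]
      have e1 : x ^ (k-1) * x ^ j = x ^ (j + k - 1) := by
        rw [← pow_add]; congr 1; omega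
      have e2 : x ^ k * x ^ (j-1) = x ^ (j + k - 1) := by
        rw [← pow_add]; congr 1; omega
      have e3 : x ^ (j-1) * x ^ k = x ^ (j + k - 1) := by
        rw [← pow_add]; congr 1; omega
      have e4 : x ^ j * x ^ (k-1) = x ^ (j + k - 1) := by
        rw [← pow_add]; congr 1; omega
      linear_combination ((R * μ - C * k) * (k:ℝ)) * e1 - ((R * μ - C * k) * (j:ℝ)) * e2
        + ((R * μ - C * j) * (j:ℝ)) * e3 - ((R * μ - C * j) * (k:ℝ)) * e4
  -- split the square sum by trichotomy
  have tri : (∑ k ∈ range (n+1), ∑ j ∈ range (n+1), F j k)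
      = ((∑ k ∈ range (n+1), ∑ j ∈ range (n+1), if j < k then F j k else 0)
        + (∑ k ∈ range (n+1), ∑ j ∈ range (n+1), if k < j then F j k else 0))
        + (∑ k ∈ range (n+1), ∑ j ∈ range (n+1), if j = k then F j k else 0) := by
    rw [← Finset.sum_add_distrib, ← Finset.sum_add_distrib]
    apply Finset.sum_congr rfl
    intro k _
    rw [← Finset.sum_add_distrib, ← Finset.sum_add_distrib]
    apply Finset.sum_congr rfl
    intro j _
    rcases lt_trichotomy j k with h | h | h
    · rw [if_pos h, if_neg (by omega), if_neg (by omega)]; ring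
    · rw [if_neg (by omega), if_neg (by omega), if_pos h]; ring
    · rw [if_neg (by omega), if_pos h, if_neg (by omega)]; ring
  have hD : (∑ k ∈ range (n+1), ∑ j ∈ range (n+1), if j = k then F j k else 0) = 0 := by
    apply Finset.sum_eq_zero
    intro k _
    apply Finset.sum_eq_zero
    intro j _
    by_cases h : j = k
    · rw [if_pos h]; subst h; simp only [hF]; ring
    · rw [if_neg h]
  have hB : (∑ k ∈ range (n+1), ∑ j ∈ range (n+1), if k < j then F j k else 0)
      = (∑ k ∈ range (n+1), ∑ j ∈ range (n+1), if j < k then F k j else 0) :=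
    Finset.sum_comm
  have hAB : (∑ k ∈ range (n+1), ∑ j ∈ range (n+1), if j < k then F j k else 0)
      + (∑ k ∈ range (n+1), ∑ j ∈ range (n+1), if j < k then F k j else 0)
      = ∑ k ∈ range (n+1), ∑ j ∈ range (n+1), G j k := by
    rw [← Finset.sum_add_distrib]
    apply Finset.sum_congr rfl
    intro k _
    rw [← Finset.sum_add_distrib]
    apply Finset.sum_congr rfl
    intro j _
    by_cases h : j < k
    · rw [if_pos h, if_pos h, hG]
      simp only [if_pos h]
      exact key j k h
    · rw [if_neg h, if_neg h, hG]
      simp only [if_neg h]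
      ring
  -- evaluate Nf as the double sum of G
  have hNf : Nf R C μ n x = ∑ j ∈ range (n+1), ∑ k ∈ range (n+1), G j k := by
    unfold Nf cf
    have push : ∀ m ∈ range (2*n),
        (∑ j ∈ range (n+1), ∑ k ∈ range (n+1),
          if j + k = m + 1 ∧ j < k then (af R C μ k - af R C μ j) * ((k:ℝ) - (j:ℝ)) else 0) * x ^ m
        = ∑ j ∈ range (n+1), ∑ k ∈ range (n+1),
            (if j + k = m + 1 ∧ j < k then (af R C μ k - af R C μ j) * ((k:ℝ) - (j:ℝ)) else 0) * x ^ m := by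
      intro m _
      rw [Finset.sum_mul]
      exact Finset.sum_congr rfl fun j _ => by rw [Finset.sum_mul]
    rw [Finset.sum_congr rfl push, Finset.sum_comm]
    apply Finset.sum_congr rfl
    intro j hj
    rw [Finset.sum_comm]
    apply Finset.sum_congr rfl
    intro k hk
    rw [Finset.mem_range] at hj hk
    by_cases hjk : j < k
    · rw [hG]
      simp only [if_pos hjk]
      rw [Finset.sum_eq_single (j + k - 1)]
      · rw [if_pos ⟨by omega, hjk⟩]
      · intro m _ hne
        rw [if_neg, zero_mul]
        rintro ⟨h1, _⟩
        omega
      · intro habs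
        exact absurd (Finset.mem_range.mpr (by omega)) habs
    · rw [hG]
      simp only [if_neg hjk]
      apply Finset.sum_eq_zero
      intro m _
      rw [if_neg, zero_mul]
      rintro ⟨_, h2⟩
      exact hjk h2
  rw [hRHS, hNf, tri, hD, add_zero, hB, hAB]
  exact Finset.sum_comm
lemma hasDeriv_g (R C μ : ℝ) (n : ℕ) {x : ℝ} (hx : Qf n x ≠ 0) :
    HasDerivAt (fun y => Pf R C μ n y / Qf n y) (Nf R C μ n x / (Qf n x)^2) x := by
  have h := (hasDeriv_Pf R C μ n x).div (hasDeriv_Qf n x) hx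
  rw [Nf_eq]
  exact h

noncomputable def Tf (n s : ℕ) : ℝ :=
  ∑ j ∈ range (n+1), if 1 ≤ j ∧ 2*j < s then ((s:ℝ) - 2*(j:ℝ))^2 else 0

lemma Tf_nonneg (n s : ℕ) : 0 ≤ Tf n s := by
  apply Finset.sum_nonneg
  intro j _
  split_ifs
  · positivity
  · exact le_refl 0

lemma Tf_mono (n s : ℕ) (hs : 1 ≤ s) : ((s:ℝ)+1) * Tf n s ≤ (s:ℝ) * Tf n (s+1) := by
  unfold Tf
  rw [Finset.mul_sum, Finset.mul_sum]
  apply Finset.sum_le_sum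
  intro j _
  by_cases h1 : 1 ≤ j ∧ 2*j < s
  · rw [if_pos h1, if_pos ⟨h1.1, by omega⟩]
    have hc1 : (2:ℝ)*(j:ℝ) + 1 ≤ (s:ℝ) := by exact_mod_cast Nat.cast_le.mpr h1.2
    have hc2 : (1:ℝ) ≤ (j:ℝ) := by exact_mod_cast h1.1
    push_cast
    nlinarith [sq_nonneg ((s:ℝ) - 2*j)]
  · rw [if_neg h1]
    by_cases h2 : 1 ≤ j ∧ 2*j < s+1
    · rw [if_pos h2]
      have : (0:ℝ) ≤ (s:ℝ) := by positivity
      nlinarith [sq_nonneg ((s:ℝ) + 1 - 2*j)]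
    · rw [if_neg h2]
      simp

lemma Tf_div_mono (n : ℕ) (s s' : ℕ) (hs : 1 ≤ s) (hss' : s ≤ s') :
    ((s':ℝ)) * Tf n s ≤ (s:ℝ) * Tf n s' := by
  induction s', hss' using Nat.le_induction with
  | base => exact le_rfl
  | succ t ht ih =>
    have h1 := Tf_mono n t (le_trans hs ht)
    have hspos : (0:ℝ) < (s:ℝ) := by exact_mod_cast hs
    have htpos : (0:ℝ) < (t:ℝ) := by exact_mod_cast le_trans hs ht
    have A : (t:ℝ) * (((t:ℝ)+1) * Tf n s) ≤ (t:ℝ) * ((s:ℝ) * Tf n (t+1)) := by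
      nlinarith [mul_le_mul_of_nonneg_left ih (by positivity : (0:ℝ) ≤ (t:ℝ)+1),
        mul_le_mul_of_nonneg_left h1 hspos.le]
    have := le_of_mul_le_mul_left A htpos
    push_cast
    push_cast at this
    linarith

lemma cf_closed (R C μ : ℝ) (n m : ℕ) (hm : m + 1 ≤ n) :
    cf R C μ n m = (R*μ - C*((m:ℝ)+1))*((m:ℝ)+1) - C * Tf n (m+1) := by
  unfold cf Tf
  have hterm : ∀ j ∈ range (n+1),
      (∑ k ∈ range (n+1),
        if j + k = m + 1 ∧ j < k then (af R C μ k - af R C μ j) * ((k:ℝ) - (j:ℝ)) else 0)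
      = (if j = 0 then (R*μ - C*((m:ℝ)+1))*((m:ℝ)+1) else 0)
        - C * (if 1 ≤ j ∧ 2*j < m+1 then (((m:ℝ)+1) - 2*(j:ℝ))^2 else 0) := by
    intro j hj
    rw [Finset.mem_range] at hj
    by_cases hj0 : j = 0
    · subst hj0
      rw [if_pos rfl, if_neg (by omega), mul_zero, sub_zero]
      rw [Finset.sum_eq_single (m+1)]
      · rw [if_pos ⟨by omega, by omega⟩]
        unfold af
        rw [if_neg (by omega), if_pos rfl]
        push_cast
        ring
      · intro k _ hk
        rw [if_neg]
        rintro ⟨h1, _⟩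
        omega
      · intro habs
        exact absurd (Finset.mem_range.mpr (by omega)) habs
    · rw [if_neg hj0, zero_sub]
      by_cases h2 : 2*j < m+1
      · rw [if_pos ⟨by omega, h2⟩]
        rw [Finset.sum_eq_single (m+1-j)]
        · rw [if_pos ⟨by omega, by omega⟩]
          unfold af
          rw [if_neg (by omega), if_neg (by omega)]
          have : ((m+1-j : ℕ):ℝ) = ((m:ℝ)+1) - (j:ℝ) := by
            push_cast [Nat.cast_sub (by omega : j ≤ m+1)]
            ring
          rw [this]
          ring
        · intro k _ hk
          rw [if_neg]
          rintro ⟨h1, _⟩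
          omega
        · intro habs
          exact absurd (Finset.mem_range.mpr (by omega)) habs
      · rw [if_neg (by omega)]
        rw [mul_zero, neg_zero]
        apply Finset.sum_eq_zero
        intro k _
        rw [if_neg]
        rintro ⟨ha, hb⟩
        omega
  rw [Finset.sum_congr rfl hterm, Finset.sum_sub_distrib]
  rw [Finset.sum_ite_eq' (range (n+1)) 0 (fun _ => (R*μ - C*((m:ℝ)+1))*((m:ℝ)+1))]
  rw [if_pos (Finset.mem_range.mpr (by omega))]
  rw [← Finset.mul_sum]
  norm_cast

lemma cf_zero_pos (R C μ : ℝ) (hC : 0 < C) (n : ℕ) (hn : 1 ≤ n)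
    (hRC : (n : ℝ) + 1 ≤ R * μ / C) : 0 < cf R C μ n 0 := by
  have hRμ : C * ((n:ℝ)+1) ≤ R * μ := by
    have h := (le_div_iff₀ hC).mp hRC
    linarith
  have hT : Tf n 1 = 0 := by
    apply Finset.sum_eq_zero
    intro j _
    rw [if_neg]
    rintro ⟨h1, h2⟩
    omega
  rw [cf_closed R C μ n 0 (by omega), hT]
  have hn1 : (1:ℝ) ≤ (n:ℝ) := by exact_mod_cast hn
  push_cast
  nlinarith

lemma cf_nonpos_large (R C μ : ℝ) (hC : 0 < C) (n m : ℕ) (hm : n + 1 ≤ m + 1) :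
    cf R C μ n m ≤ 0 := by
  unfold cf
  apply Finset.sum_nonpos
  intro j hj
  apply Finset.sum_nonpos
  intro k hk
  rw [Finset.mem_range] at hj hk
  split_ifs with h
  · obtain ⟨h1, h2⟩ := h
    unfold af
    rw [if_neg (by omega), if_neg (by omega)]
    have hjk : (j:ℝ) < (k:ℝ) := by exact_mod_cast h2
    nlinarith [sq_nonneg ((k:ℝ) - (j:ℝ))]
  · exact le_refl 0

lemma cf_top_neg (R C μ : ℝ) (hC : 0 < C) (n : ℕ) (hn : 2 ≤ n) :
    cf R C μ n (2*n-2) < 0 := by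
  unfold cf
  have : ∑ j ∈ range (n+1), ∑ k ∈ range (n+1),
      (if j + k = (2*n-2) + 1 ∧ j < k then (af R C μ k - af R C μ j) * ((k:ℝ) - (j:ℝ)) else 0)
      = -C := by
    rw [Finset.sum_eq_single (n-1)]
    · rw [Finset.sum_eq_single n]
      · rw [if_pos ⟨by omega, by omega⟩]
        unfold af
        rw [if_neg (by omega), if_neg (by omega)]
        have h1 : ((n-1 : ℕ):ℝ) = (n:ℝ) - 1 := by
          push_cast [Nat.cast_sub (by omega : 1 ≤ n)]
          ring
        rw [h1]
        ring
      · intro k _ hk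
        rw [if_neg]
        rintro ⟨ha, hb⟩
        omega
      · intro habs
        exact absurd (Finset.mem_range.mpr (by omega)) habs
    · intro j hj hne
      rw [Finset.mem_range] at hj
      apply Finset.sum_eq_zero
      intro k hk
      rw [Finset.mem_range] at hk
      rw [if_neg]
      rintro ⟨ha, hb⟩
      omega
    · intro habs
      exact absurd (Finset.mem_range.mpr (by omega)) habs
  rw [this]
  linarith

lemma cf_step (R C μ : ℝ) (hC : 0 < C) (n m m' : ℕ) (h : cf R C μ n m < 0)
    (hmm : m < m') (hm' : m' + 1 ≤ n) : cf R C μ n m' ≤ 0 := by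
  have hm : m + 1 ≤ n := by omega
  rw [cf_closed R C μ n m hm] at h
  rw [cf_closed R C μ n m' hm']
  set s : ℝ := (m:ℝ) + 1 with hs
  set s' : ℝ := (m':ℝ) + 1 with hs'
  have hdiv := Tf_div_mono n (m+1) (m'+1) (by omega) (by omega)
  have hcast : ((m+1 : ℕ):ℝ) = s := by push_cast; rw [hs]
  have hcast' : ((m'+1 : ℕ):ℝ) = s' := by push_cast; rw [hs']
  rw [hcast, hcast'] at hdiv
  have hs1 : (1:ℝ) ≤ s := by rw [hs]; push_cast; linarith [Nat.cast_nonneg (α := ℝ) m]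
  have hss' : s + 1 ≤ s' := by
    rw [hs, hs']
    have : (m:ℝ) + 1 ≤ (m':ℝ) := by exact_mod_cast hmm
    linarith
  have hT := Tf_nonneg n (m+1)
  -- h : (R*μ - C*s)*s - C * Tf n (m+1) < 0
  -- hdiv : s' * Tf n (m+1) ≤ s * Tf n (m'+1)
  -- goal : (R*μ - C*s')*s' - C * Tf n (m'+1) ≤ 0
  have hs0 : (0:ℝ) < s := by linarith
  have key : s * ((R*μ - C*s')*s' - C * Tf n (m'+1)) ≤ s * 0 := by
    rw [mul_zero]
    nlinarith [mul_le_mul_of_nonneg_left hdiv hC.le,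
      mul_lt_mul_of_pos_right h (by linarith : (0:ℝ) < s'),
      mul_nonneg (mul_nonneg (mul_nonneg hC.le (sub_nonneg.mpr (by linarith : s ≤ s')))
        (by linarith : (0:ℝ) ≤ s)) (by linarith : (0:ℝ) ≤ s')]
  exact le_of_mul_le_mul_left key hs0

lemma unimodal (R C μ : ℝ) (hC : 0 < C)
    (n : ℕ) (hn : 2 ≤ n) (hRC : (n : ℝ) + 1 ≤ R * μ / C) :
    ∃ ρstar : ℝ, 0 < ρstar ∧
      StrictMonoOn (socialRate R C μ n) (Set.Icc (0 : ℝ) ρstar) ∧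
      StrictAntiOn (socialRate R C μ n) (Set.Ici ρstar) := by
  classical
  have hc0 := cf_zero_pos R C μ hC n (by omega) hRC
  have hctop := cf_top_neg R C μ hC n hn
  have hex : ∃ m, cf R C μ n m < 0 := ⟨2*n-2, hctop⟩
  set M := Nat.find hex with hM
  have hMneg : cf R C μ n M < 0 := Nat.find_spec hex
  have hMnonneg : ∀ m < M, 0 ≤ cf R C μ n m := fun m hm => le_of_not_gt (Nat.find_min hex hm)
  have hM1 : 1 ≤ M := by
    rcases Nat.eq_zero_or_pos M with h | h
    · rw [h] at hMneg; linarith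
    · exact h
  have hNeg : ∀ m, M ≤ m → cf R C μ n m ≤ 0 := by
    intro m hm
    rcases eq_or_lt_of_le hm with h | h
    · rw [← h]; exact hMneg.le
    · by_cases hmn : m + 1 ≤ n
      · exact cf_step R C μ hC n M m hMneg h hmn
      · exact cf_nonpos_large R C μ hC n m (by omega)
  -- strict antitonicity of Nf x / x^M on (0, ∞)
  have hanti : StrictAntiOn (fun x => Nf R C μ n x / x^M) (Ioi (0:ℝ)) := by
    intro x hx y hy hxy
    rw [Set.mem_Ioi] at hx hy
    simp only [Nf]
    rw [Finset.sum_div, Finset.sum_div]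
    apply Finset.sum_lt_sum
    · intro m hm
      rw [div_le_div_iff₀ (pow_pos hy M) (pow_pos hx M)]
      by_cases h : m < M
      · have hxM : x^M = x^m * x^(M-m) := by rw [← pow_add]; congr 1; omega
        have hyM : y^M = y^m * y^(M-m) := by rw [← pow_add]; congr 1; omega
        have hpow : x^(M-m) < y^(M-m) := pow_lt_pow_left₀ hxy hx.le (by omega)
        have h1 : y^m * x^M ≤ x^m * y^M := by
          rw [hxM, hyM]
          nlinarith [pow_pos hx m, pow_pos hy m, mul_pos (pow_pos hx m) (pow_pos hy m)]
        nlinarith [hMnonneg m h, mul_le_mul_of_nonneg_left h1 (hMnonneg m h)]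
      · have h' : M ≤ m := by omega
        have hxm : x^m = x^M * x^(m-M) := by rw [← pow_add]; congr 1; omega
        have hym : y^m = y^M * y^(m-M) := by rw [← pow_add]; congr 1; omega
        have hpow : x^(m-M) ≤ y^(m-M) := pow_le_pow_left₀ hx.le hxy.le _
        have h1 : x^m * y^M ≤ y^m * x^M := by
          rw [hxm, hym]
          nlinarith [pow_pos hx M, pow_pos hy M, mul_pos (pow_pos hx M) (pow_pos hy M)]
        nlinarith [hNeg m h', mul_le_mul_of_nonpos_left h1 (hNeg m h')]
    · refine ⟨0, Finset.mem_range.mpr (by omega), ?_⟩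
      rw [div_lt_div_iff₀ (pow_pos hy M) (pow_pos hx M)]
      have hpow : x^M < y^M := pow_lt_pow_left₀ hxy hx.le (by omega)
      simp only [pow_zero, mul_one]
      nlinarith
  -- Nf is continuous
  have hNcont : Continuous (Nf R C μ n) := by
    unfold Nf
    exact continuous_finset_sum _ fun m _ => continuous_const.mul (continuous_pow m)
  have hN0 : Nf R C μ n 0 = cf R C μ n 0 := by
    unfold Nf
    rw [Finset.sum_eq_single 0]
    · simp
    · intro m _ hm
      rw [zero_pow hm, mul_zero]
    · intro habs
      exact absurd (Finset.mem_range.mpr (by omega)) habs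
  -- a small positive point where Nf > 0
  have hop : IsOpen {x : ℝ | 0 < Nf R C μ n x} := isOpen_lt continuous_const hNcont
  obtain ⟨ε, hε, hball⟩ := Metric.isOpen_iff.mp hop 0 (by simpa [hN0] using hc0)
  set x₀ : ℝ := ε/2 with hx₀def
  have hx₀pos : 0 < x₀ := by positivity
  have hNx₀ : 0 < Nf R C μ n x₀ := hball (by
    simp only [Metric.mem_ball, Real.dist_eq, sub_zero]
    rw [abs_of_pos hx₀pos]
    linarith)
  -- a large point where Nf < 0
  set K := ∑ m ∈ range (2*n), |cf R C μ n m| with hK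
  have hcf1 : cf R C μ n (2*n-1) ≤ 0 := by
    apply hNeg
    exact le_trans (Nat.find_min' hex hctop) (by omega)
  have hlarge : ∀ ρ : ℝ, 1 ≤ ρ → K + cf R C μ n (2*n-2) * ρ < 0 → Nf R C μ n ρ < 0 := by
    intro ρ h1 h2
    have hρpos : (0:ℝ) < ρ := by linarith
    have hsplit : Nf R C μ n ρ = (∑ m ∈ range (2*n-2), cf R C μ n m * ρ^m)
        + cf R C μ n (2*n-2) * ρ^(2*n-2) + cf R C μ n (2*n-1) * ρ^(2*n-1) := by
      unfold Nf
      rw [show 2*n = (2*n-2) + 1 + 1 by omega, Finset.sum_range_succ, Finset.sum_range_succ]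
      congr 2 <;> · congr 1 <;> · congr 1; omega
    have hb1 : (∑ m ∈ range (2*n-2), cf R C μ n m * ρ^m) ≤ K * ρ^(2*n-3) := by
      calc (∑ m ∈ range (2*n-2), cf R C μ n m * ρ^m)
          ≤ ∑ m ∈ range (2*n-2), |cf R C μ n m| * ρ^(2*n-3) := by
            apply Finset.sum_le_sum
            intro m hm
            rw [Finset.mem_range] at hm
            apply mul_le_mul (le_abs_self _) (pow_le_pow_right₀ h1 (by omega))
              (pow_nonneg hρpos.le m) (abs_nonneg _)
        _ = (∑ m ∈ range (2*n-2), |cf R C μ n m|) * ρ^(2*n-3) := (Finset.sum_mul _ _ _).symm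
        _ ≤ K * ρ^(2*n-3) := by
            apply mul_le_mul_of_nonneg_right _ (pow_nonneg hρpos.le _)
            apply Finset.sum_le_sum_of_subset_of_nonneg
            · exact Finset.range_subset_range.mpr (by omega)
            · intro m _ _; exact abs_nonneg _
    have hb2 : cf R C μ n (2*n-1) * ρ^(2*n-1) ≤ 0 :=
      mul_nonpos_of_nonpos_of_nonneg hcf1 (pow_nonneg hρpos.le _)
    have hb3 : cf R C μ n (2*n-2) * ρ^(2*n-2) = (cf R C μ n (2*n-2) * ρ) * ρ^(2*n-3) := by
      rw [show 2*n-2 = (2*n-3)+1 by omega, pow_succ]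
      ring
    have hfin : (K + cf R C μ n (2*n-2) * ρ) * ρ^(2*n-3) < 0 :=
      mul_neg_of_neg_of_pos h2 (pow_pos hρpos _)
    rw [hsplit, hb3]
    nlinarith [hb1, hb2, hfin]
  set x₁ : ℝ := max (x₀ + 1) (max 1 ((K+1) / (-cf R C μ n (2*n-2)))) with hx₁def
  have hx₁1 : (1:ℝ) ≤ x₁ := le_trans (le_max_left 1 _) (le_max_right _ _)
  have hnegtop : (0:ℝ) < -cf R C μ n (2*n-2) := by linarith
  have hx₁big : (K+1) / (-cf R C μ n (2*n-2)) ≤ x₁ :=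
    le_trans (le_max_right 1 _) (le_max_right _ _)
  have hNx₁ : Nf R C μ n x₁ < 0 := by
    apply hlarge x₁ hx₁1
    rw [div_le_iff₀ hnegtop] at hx₁big
    nlinarith
  have hx₀x₁ : x₀ ≤ x₁ := le_trans (by linarith) (le_max_left (x₀+1) _)
  -- IVT for h := Nf / x^M on [x₀, x₁]
  have hconth : ContinuousOn (fun x => Nf R C μ n x / x^M) (Icc x₀ x₁) := by
    apply ContinuousOn.div hNcont.continuousOn (continuous_pow M).continuousOn
    intro x hx
    exact pow_ne_zero M (ne_of_gt (lt_of_lt_of_le hx₀pos hx.1))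
  have hmem : (0:ℝ) ∈ Icc ((fun x => Nf R C μ n x / x^M) x₁) ((fun x => Nf R C μ n x / x^M) x₀) := by
    constructor
    · exact le_of_lt (div_neg_of_neg_of_pos hNx₁ (pow_pos (lt_of_lt_of_le hx₀pos hx₀x₁) M))
    · exact le_of_lt (div_pos hNx₀ (pow_pos hx₀pos M))
  obtain ⟨ρstar, hρmem, hρeq⟩ := intermediate_value_Icc' hx₀x₁ hconth hmem
  have hρpos : 0 < ρstar := lt_of_lt_of_le hx₀pos hρmem.1
  -- sign of Nf on both sides of ρstar
  have hNpos : ∀ ρ : ℝ, 0 < ρ → ρ < ρstar → 0 < Nf R C μ n ρ := by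
    intro ρ h1 h2
    have h3 := hanti (Set.mem_Ioi.mpr h1) (Set.mem_Ioi.mpr hρpos) h2
    rw [hρeq] at h3
    rcases div_pos_iff.mp h3 with ⟨h4, _⟩ | ⟨_, h5⟩
    · exact h4
    · exact absurd (pow_pos h1 M) (by linarith)
  have hNneg : ∀ ρ : ℝ, ρstar < ρ → Nf R C μ n ρ < 0 := by
    intro ρ h2
    have h1 : (0:ℝ) < ρ := lt_trans hρpos h2
    have h3 := hanti (Set.mem_Ioi.mpr hρpos) (Set.mem_Ioi.mpr h1) h2
    rw [hρeq] at h3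
    rcases div_neg_iff.mp h3 with ⟨_, h5⟩ | ⟨h4, _⟩
    · exact absurd (pow_pos h1 M) (by linarith)
    · exact h4
  -- monotonicity of g on [0, ρstar], antitonicity on [ρstar, ∞)
  have hgcont : ∀ x : ℝ, 0 ≤ x → ContinuousAt (fun y => Pf R C μ n y / Qf n y) x :=
    fun x hx => (hasDeriv_g R C μ n (ne_of_gt (Qf_pos n hx))).continuousAt
  have hmono : StrictMonoOn (fun y => Pf R C μ n y / Qf n y) (Icc 0 ρstar) := by
    apply strictMonoOn_of_deriv_pos (convex_Icc 0 ρstar)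
    · exact fun x hx => (hgcont x hx.1).continuousWithinAt
    · intro x hx
      rw [interior_Icc] at hx
      have hQ := Qf_pos n hx.1.le
      rw [(hasDeriv_g R C μ n (ne_of_gt hQ)).deriv]
      exact div_pos (hNpos x hx.1 hx.2) (pow_pos hQ 2)
  have hanti2 : StrictAntiOn (fun y => Pf R C μ n y / Qf n y) (Ici ρstar) := by
    apply strictAntiOn_of_deriv_neg (convex_Ici ρstar)
    · exact fun x hx => (hgcont x (le_trans hρpos.le hx)).continuousWithinAt
    · intro x hx
      rw [interior_Ici] at hx
      have hQ := Qf_pos n (le_of_lt (lt_trans hρpos hx))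
      rw [(hasDeriv_g R C μ n (ne_of_gt hQ)).deriv]
      exact div_neg_of_neg_of_pos (hNneg x hx) (pow_pos hQ 2)
  refine ⟨ρstar, hρpos, ?_, ?_⟩
  · intro x hx y hy hxy
    rw [rate_eq R C μ n (by omega) hx.1, rate_eq R C μ n (by omega) hy.1]
    exact hmono hx hy hxy
  · intro x hx y hy hxy
    rw [rate_eq R C μ n (by omega) (le_trans hρpos.le hx),
      rate_eq R C μ n (by omega) (le_trans hρpos.le hy)]
    exact hanti2 hx hy hxy

lemma n_one_case (R C μ : ℝ) (hC : 0 < C) (hRC : (1 : ℝ) + 1 ≤ R * μ / C) :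
    ConcaveOn ℝ (Set.Ici (0 : ℝ)) (socialRate R C μ 1) ∧
      MonotoneOn (socialRate R C μ 1) (Set.Ici (0 : ℝ)) := by
  have ha : 0 ≤ R * μ - C := by
    have h := (le_div_iff₀ hC).mp hRC
    linarith
  have hPf1 : ∀ x : ℝ, Pf R C μ 1 x = (R*μ - C) * x := by
    intro x
    unfold Pf af
    rw [Finset.sum_range_succ, Finset.sum_range_succ, Finset.sum_range_zero]
    norm_num
  have hQf1 : ∀ x : ℝ, Qf 1 x = 1 + x := by
    intro x
    unfold Qf
    rw [Finset.sum_range_succ, Finset.sum_range_succ, Finset.sum_range_zero]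
    norm_num
  constructor
  · refine ⟨convex_Ici 0, ?_⟩
    intro x hx y hy p q hp hq hpq
    have hx' : (0:ℝ) ≤ x := hx
    have hy' : (0:ℝ) ≤ y := hy
    have hmem' : (0:ℝ) ≤ p • x + q • y := by
      simp only [smul_eq_mul]
      exact add_nonneg (mul_nonneg hp hx') (mul_nonneg hq hy')
    rw [rate_eq R C μ 1 le_rfl hx', rate_eq R C μ 1 le_rfl hy', rate_eq R C μ 1 le_rfl hmem']
    rw [hPf1, hPf1, hPf1, hQf1, hQf1, hQf1]
    simp only [smul_eq_mul]
    have h1x : (0:ℝ) < 1 + x := by linarith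
    have h1y : (0:ℝ) < 1 + y := by linarith
    have h1z : (0:ℝ) < 1 + (p*x + q*y) := by
      simp only [smul_eq_mul] at hmem'
      linarith
    have hq' : q = 1 - p := by linarith
    subst hq'
    have e1 : p * ((R*μ-C)*x/(1+x)) = p*((R*μ-C)*x)/(1+x) := by ring
    have e2 : (1-p) * ((R*μ-C)*y/(1+y)) = (1-p)*((R*μ-C)*y)/(1+y) := by ring
    rw [e1, e2, div_add_div _ _ (ne_of_gt h1x) (ne_of_gt h1y),
      div_le_div_iff₀ (by positivity) h1z]
    nlinarith [mul_nonneg (mul_nonneg (mul_nonneg ha hp) hq) (sq_nonneg (x-y)),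
      mul_nonneg hp hq, mul_nonneg hx' hy']
  · intro x hx y hy hxy
    have hx' : (0:ℝ) ≤ x := hx
    have hy' : (0:ℝ) ≤ y := hy
    rw [rate_eq R C μ 1 le_rfl hx', rate_eq R C μ 1 le_rfl hy']
    rw [hPf1, hPf1, hQf1, hQf1]
    have h1x : (0:ℝ) < 1 + x := by linarith
    have h1y : (0:ℝ) < 1 + y := by linarith
    rw [div_le_div_iff₀ h1x h1y]
    nlinarith [mul_nonneg ha (sub_nonneg.mpr hxy)]

theorem stmt3 (R C μ : ℝ) (hR : 0 < R) (hC : 0 < C) (hμ : 0 < μ)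
    (n : ℕ) (hn : 1 ≤ n) (hRC : (n : ℝ) + 1 ≤ R * μ / C) :
    (ConcaveOn ℝ (Set.Ici (0 : ℝ)) (socialRate R C μ n) ∧
      MonotoneOn (socialRate R C μ n) (Set.Ici (0 : ℝ))) ∨
    (∃ ρstar : ℝ, 0 < ρstar ∧
      StrictMonoOn (socialRate R C μ n) (Set.Icc (0 : ℝ) ρstar) ∧
      StrictAntiOn (socialRate R C μ n) (Set.Ici ρstar)) := by
  rcases eq_or_lt_of_le hn with h1 | h2
  · left
    subst h1
    exact n_one_case R C μ hC (by exact_mod_cast hRC)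
  · right
    exact unimodal R C μ hC n (by omega) hRC
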